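/- If f : X → [0,∞) has a closed graph, A ⊆ C(f), x is locally connectedly accessible from A, and x ∈ A^f_∞, then f(u) tends to +∞ as u tends to x within A. -/

import Mathlib

open Filter

/-- `AInf f A` is the set `A^f_∞`. -/
def AInf {X : Type*} [TopologicalSpace X] (f : X → ℝ) (A : Set X) : Set X :=
  {x ∈ closure A | ∀ M > (0 : ℝ), ∀ U : Set X, IsOpen U → x ∈ U → ∃ y ∈ U ∩ A, f y > M}

/-- `x` is locally connectedly accessible from `A`. -/
def LocConnAccess {X : Type*} [TopologicalSpace X] (A : Set X) (x : X) : Prop :=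
  ∀ U : Set X, IsOpen U → x ∈ U → ∃ G : Set X, IsOpen G ∧ x ∈ G ∧ G ⊆ U ∧
    ∀ u ∈ G ∩ A, ∀ v ∈ G ∩ A, ∃ E : Set X, IsConnected E ∧ u ∈ E ∧ v ∈ E ∧ E ⊆ U ∩ A

theorem exploding_limit
    {X : Type*} [TopologicalSpace X] (f : X → ℝ) (hnonneg : ∀ x, 0 ≤ f x)
    (hclosed : IsClosed {p : X × ℝ | p.2 = f p.1}) (A : Set X)
    (hA : A ⊆ {x | ContinuousAt f x}) (x : X)
    (hacc : LocConnAccess A x) (hxinf : x ∈ AInf f A) :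
    Tendsto f (nhdsWithin x A) atTop := by
  by_contra hcon
  rw [Filter.tendsto_atTop] at hcon
  push_neg at hcon
  obtain ⟨M, hM⟩ := hcon
  set M' := max M 1 with hM'def
  have hM'pos : (0 : ℝ) < M' := lt_of_lt_of_le one_pos (le_max_right _ _)
  have key : ∀ c : ℝ, M' < c → c = f x := by
    intro c hc
    have hmem : (x, c) ∈ {p : X × ℝ | p.2 = f p.1} := by
      rw [← hclosed.closure_eq, mem_closure_iff_nhds]
      intro t ht
      rw [mem_nhds_prod_iff] at ht
      obtain ⟨U, hU, V, hV, hUV⟩ := ht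
      obtain ⟨U', hU'sub, hU'open, hxU'⟩ := mem_nhds_iff.mp hU
      obtain ⟨G, hGopen, hxG, hGsub, hGconn⟩ := hacc U' hU'open hxU'
      obtain ⟨u, huAG, hu⟩ := Filter.frequently_iff.mp hM
        (inter_mem_nhdsWithin A (hGopen.mem_nhds hxG))
      obtain ⟨y, hyGA, hy⟩ := hxinf.2 c (lt_trans hM'pos hc) G hGopen hxG
      obtain ⟨E, hEconn, huE, hyE, hEsub⟩ :=
        hGconn u ⟨huAG.2, huAG.1⟩ y hyGA
      have hcont : ContinuousOn f E := fun z hz =>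
        (hA (hEsub hz).2).continuousWithinAt
      have himg : IsPreconnected (f '' E) := (hEconn.image f hcont).isPreconnected
      have hcmem : c ∈ f '' E := by
        apply himg.Icc_subset (Set.mem_image_of_mem f huE) (Set.mem_image_of_mem f hyE)
        constructor
        · exact le_of_lt (lt_trans (lt_of_lt_of_le hu (le_max_left M 1)) hc)
        · exact le_of_lt hy
      obtain ⟨z, hzE, hfz⟩ := hcmem
      refine ⟨(z, c), hUV ⟨hU'sub (hEsub hzE).1, mem_of_mem_nhds hV⟩, hfz.symm⟩
    exact hmem
  have h1 := key (M' + 1) (by linarith)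
  have h2 := key (M' + 2) (by linarith)
  linarith
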